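/- For β > 0 and H Hermitian on a finite-dimensional complex Hilbert space, the Helmholtz functional Ω(ρ) = Tr(ρH) + β⁻¹Tr(ρ log ρ) attains its minimum over the set of density matrices, and the unique minimizer is the Gibbs state ρ = e^{-βH}/Tr(e^{-βH}). -/

import Mathlib

open Matrix BigOperators
open scoped ComplexOrder

/-- Von Neumann entropy `S(ρ) = -Tr(ρ log ρ)`, defined spectrally with `0 log 0 = 0`. -/
noncomputable def vnEntropy {n : Type*} [Fintype n] [DecidableEq n]
    (ρ : Matrix n n ℂ) : ℝ :=
  if h : ρ.IsHermitian then -∑ i, h.eigenvalues i * Real.log (h.eigenvalues i) else 0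

/-- A density matrix: Hermitian positive semidefinite with unit trace. -/
def IsDensityMatrix {n : Type*} [Fintype n] [DecidableEq n] (ρ : Matrix n n ℂ) : Prop :=
  ρ.PosSemidef ∧ ρ.trace = 1

/-- The Helmholtz functional `Ω(ρ) = Tr(ρH) + β⁻¹ Tr(ρ log ρ) = Tr(ρH) - β⁻¹ S(ρ)`. -/
noncomputable def helmholtz {n : Type*} [Fintype n] [DecidableEq n]
    (H : Matrix n n ℂ) (β : ℝ) (ρ : Matrix n n ℂ) : ℝ :=
  ((ρ * H).trace).re - β⁻¹ * vnEntropy ρ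

/-- The Gibbs state `e^{-βH} / Tr(e^{-βH})`. -/
noncomputable def gibbs {n : Type*} [Fintype n] [DecidableEq n]
    (β : ℝ) (H : Matrix n n ℂ) : Matrix n n ℂ :=
  ((NormedSpace.exp ((-β : ℂ) • H)).trace)⁻¹ • NormedSpace.exp ((-β : ℂ) • H)

namespace GibbsProofAux

open Polynomial

variable {n : ℕ}

lemma charpoly_diag (v : Fin n → ℂ) :
    (Matrix.diagonal v).charpoly = ∏ i, (X - C (v i)) := by
  rw [Matrix.charpoly_of_upperTriangular _ (Matrix.blockTriangular_diagonal v)]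
  simp

lemma charpoly_conj (U A : Matrix (Fin n) (Fin n) ℂ) (h1 : U * star U = 1) :
    (U * A * star U).charpoly = A.charpoly := by
  have hm : ∀ (M N : Matrix (Fin n) (Fin n) ℂ),
      (M * N).map (C : ℂ →+* ℂ[X]) = M.map (C : ℂ →+* ℂ[X]) * N.map (C : ℂ →+* ℂ[X]) :=
    fun M N => Matrix.map_mul
  have hone : (1 : Matrix (Fin n) (Fin n) ℂ).map (C : ℂ →+* ℂ[X]) = 1 :=
    Matrix.map_one _ (map_zero C) (map_one C)
  have hUU : U.map (C : ℂ →+* ℂ[X]) * (star U).map (C : ℂ →+* ℂ[X]) = 1 := by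
    rw [← hm, h1, hone]
  have hscal : (Matrix.scalar (Fin n) (X : ℂ[X])) =
      (X : ℂ[X]) • (1 : Matrix (Fin n) (Fin n) ℂ[X]) := by
    rw [smul_eq_diagonal_mul, mul_one]
    rfl
  have hchar : charmatrix (U * A * star U) =
      U.map (C : ℂ →+* ℂ[X]) * charmatrix A * (star U).map (C : ℂ →+* ℂ[X]) := by
    unfold charmatrix
    simp only [RingHom.mapMatrix_apply]
    rw [mul_sub, sub_mul, hm (U * A), hm U A]
    congr 1
    rw [hscal, Matrix.mul_smul, mul_one, Matrix.smul_mul, hUU]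
  unfold Matrix.charpoly
  rw [hchar, det_mul, det_mul]
  have hd : (U.map (C : ℂ →+* ℂ[X])).det * ((star U).map (C : ℂ →+* ℂ[X])).det = 1 := by
    rw [← det_mul, hUU, det_one]
  linear_combination (charmatrix A).det * hd

lemma prod_roots (e : Fin n → ℝ) :
    (∏ i, (X - C ((e i : ℂ)))).roots = Finset.univ.val.map (fun i => ((e i : ℂ))) := by
  rw [Finset.prod_eq_multiset_prod]
  rw [show Finset.univ.val.map (fun i => X - C ((e i : ℂ)))
      = (Finset.univ.val.map (fun i => ((e i : ℂ)))).map (fun a => X - C a) by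
    rw [Multiset.map_map]; rfl]
  exact roots_multiset_prod_X_sub_C _

lemma eig_multiset (A : Matrix (Fin n) (Fin n) ℂ) (hA : A.IsHermitian)
    (U : Matrix (Fin n) (Fin n) ℂ) (hU : U * star U = 1) (d : Fin n → ℝ)
    (hAd : A = U * Matrix.diagonal (fun i => (d i : ℂ)) * star U) :
    Multiset.map hA.eigenvalues Finset.univ.val = Multiset.map d Finset.univ.val := by
  have h1 : A.charpoly = ∏ i, (X - C ((hA.eigenvalues i : ℂ))) := by
    conv_lhs => rw [hA.spectral_theorem]
    rw [Unitary.conjStarAlgAut_apply]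
    rw [charpoly_conj _ _ (Matrix.mem_unitaryGroup_iff.mp hA.eigenvectorUnitary.2)]
    rw [show (diagonal (RCLike.ofReal ∘ hA.eigenvalues) : Matrix (Fin n) (Fin n) ℂ)
        = diagonal (fun i => ((hA.eigenvalues i : ℂ))) from rfl, charpoly_diag]
  have h2 : A.charpoly = ∏ i, (X - C ((d i : ℂ))) := by
    conv_lhs => rw [hAd]
    rw [charpoly_conj _ _ hU, charpoly_diag]
  have h3 := congrArg Polynomial.roots (h1.symm.trans h2)
  rw [prod_roots, prod_roots] at h3
  have h4 : Multiset.map (Complex.ofReal ∘ hA.eigenvalues) Finset.univ.val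
      = Multiset.map (Complex.ofReal ∘ d) Finset.univ.val := h3
  rw [← Multiset.map_map, ← Multiset.map_map] at h4
  exact Multiset.map_injective Complex.ofReal_injective h4

/-- The entropy sum is independent of the chosen unitary diagonalization. -/
lemma sum_eig (A : Matrix (Fin n) (Fin n) ℂ) (hA : A.IsHermitian)
    (U : Matrix (Fin n) (Fin n) ℂ) (hU : U * star U = 1) (d : Fin n → ℝ)
    (hAd : A = U * Matrix.diagonal (fun i => (d i : ℂ)) * star U) :
    ∑ i, hA.eigenvalues i * Real.log (hA.eigenvalues i) = ∑ i, d i * Real.log (d i) := by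
  have h := eig_multiset A hA U hU d hAd
  have e1 : ∑ i, hA.eigenvalues i * Real.log (hA.eigenvalues i)
      = ((Multiset.map hA.eigenvalues Finset.univ.val).map
          (fun x => x * Real.log x)).sum := by
    rw [Multiset.map_map]; rfl
  have e2 : ∑ i, d i * Real.log (d i)
      = ((Multiset.map d Finset.univ.val).map (fun x => x * Real.log x)).sum := by
    rw [Multiset.map_map]; rfl
  rw [e1, e2, h]

lemma trace_conj (U M : Matrix (Fin n) (Fin n) ℂ) (hU : star U * U = 1) :
    (U * M * star U).trace = M.trace := by
  rw [Matrix.trace_mul_comm, ← Matrix.mul_assoc, hU, one_mul]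

lemma conj_mul (U A B : Matrix (Fin n) (Fin n) ℂ) (hU : star U * U = 1) :
    (U * A * star U) * (U * B * star U) = U * (A * B) * star U := by
  have h : star U * (U * (B * star U)) = B * star U := by
    rw [← Matrix.mul_assoc, hU, one_mul]
  simp only [Matrix.mul_assoc]
  rw [h]

lemma exp_conj_unitary (U : Matrix (Fin n) (Fin n) ℂ) (hU1 : U * star U = 1)
    (hU2 : star U * U = 1) (D : Matrix (Fin n) (Fin n) ℂ) :
    NormedSpace.exp (U * D * star U) = U * NormedSpace.exp D * star U := by
  have hUinv : U⁻¹ = star U := Matrix.inv_eq_right_inv hU1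
  have hunit : IsUnit U := ⟨⟨U, star U, hU1, hU2⟩, rfl⟩
  rw [← hUinv, Matrix.exp_conj U D hunit]

lemma exp_diag_real (v : Fin n → ℝ) :
    NormedSpace.exp (Matrix.diagonal (fun i => ((v i : ℝ) : ℂ)))
      = Matrix.diagonal (fun i => ((Real.exp (v i) : ℝ) : ℂ)) := by
  rw [Matrix.exp_diagonal, Pi.exp_def, ← Complex.exp_eq_exp_ℂ]
  simp [Complex.ofReal_exp]

lemma klein (x y : ℝ) (hx : 0 ≤ x) (hy : 0 < y) :
    x - y ≤ x * Real.log x - x * Real.log y ∧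
    (x - y = x * Real.log x - x * Real.log y → x = y) := by
  rcases hx.eq_or_lt with h0 | hxpos
  · subst h0
    simp only [zero_mul, sub_zero, zero_sub, sub_self]
    constructor
    · linarith
    · intro h; linarith
  · have hxne : x ≠ 0 := hxpos.ne'
    have hkey : x * Real.log x - x * Real.log y = -(x * Real.log (y / x)) := by
      rw [Real.log_div hy.ne' hxne]; ring
    have hle : Real.log (y / x) ≤ y / x - 1 :=
      Real.log_le_sub_one_of_pos (div_pos hy hxpos)
    have hxy : x * (y / x) = y := by field_simp
    constructor
    · rw [hkey]
      nlinarith [mul_le_mul_of_nonneg_left hle hxpos.le]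
    · intro heq
      by_contra hne
      have ht : y / x ≠ 1 := by
        intro h
        apply hne
        field_simp at h
        linarith
      have hlt : Real.log (y / x) < y / x - 1 :=
        Real.log_lt_sub_one_of_pos (div_pos hy hxpos) ht
      rw [hkey] at heq
      nlinarith [mul_lt_mul_of_pos_left hlt hxpos]

/-- The core real-analytic inequality (Gibbs variational principle, scalar form). -/
lemma core (p q ε : Fin n → ℝ) (c : Fin n → Fin n → ℝ) (β Λ : ℝ) (hβ : 0 < β)
    (hp0 : ∀ i, 0 ≤ p i) (hq0 : ∀ i, 0 < q i)
    (hsp : ∑ i, p i = 1) (hsq : ∑ i, q i = 1)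
    (hc0 : ∀ i j, 0 ≤ c i j)
    (hrow : ∀ i, ∑ j, c i j = 1) (hcol : ∀ j, ∑ i, c i j = 1)
    (hlogq : ∀ j, Real.log (q j) = -(β * ε j) - Λ) :
    -(β⁻¹ * Λ) ≤ (∑ i, ∑ j, p i * ε j * c i j) + β⁻¹ * ∑ i, p i * Real.log (p i) ∧
    ((∑ i, ∑ j, p i * ε j * c i j) + β⁻¹ * ∑ i, p i * Real.log (p i) = -(β⁻¹ * Λ) →
      ∀ i j, c i j = 0 ∨ p i = q j) := by
  have hβne : β ≠ 0 := hβ.ne'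
  have hβi : (0:ℝ) < β⁻¹ := inv_pos.mpr hβ
  have hcp : ∑ i, ∑ j, c i j * p i = 1 := by
    rw [Finset.sum_congr rfl (fun i _ => by rw [← Finset.sum_mul, hrow i, one_mul])]
    exact hsp
  have hcq : ∑ i, ∑ j, c i j * q j = 1 := by
    rw [Finset.sum_comm]
    rw [Finset.sum_congr rfl (fun j _ => by rw [← Finset.sum_mul, hcol j, one_mul])]
    exact hsq
  have hkey : ∑ i, ∑ j, c i j * (p i * Real.log (p i) - p i * Real.log (q j))
      = (∑ i, p i * Real.log (p i)) + β * (∑ i, ∑ j, p i * ε j * c i j) + Λ := by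
    have e : ∀ i j, c i j * (p i * Real.log (p i) - p i * Real.log (q j))
        = c i j * (p i * Real.log (p i)) + β * (p i * ε j * c i j) + (c i j * p i) * Λ := by
      intro i j; rw [hlogq j]; ring
    rw [Finset.sum_congr rfl (fun i _ => Finset.sum_congr rfl (fun j _ => e i j))]
    have e2 : ∀ i, ∑ j, (c i j * (p i * Real.log (p i)) + β * (p i * ε j * c i j)
        + (c i j * p i) * Λ)
        = p i * Real.log (p i) + β * (∑ j, p i * ε j * c i j)
          + (∑ j, c i j * p i) * Λ := by
      intro i
      rw [Finset.sum_add_distrib, Finset.sum_add_distrib, ← Finset.sum_mul, ← Finset.mul_sum,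
        ← Finset.sum_mul, hrow i, one_mul]
    rw [Finset.sum_congr rfl (fun i _ => e2 i)]
    rw [Finset.sum_add_distrib, Finset.sum_add_distrib, ← Finset.mul_sum, ← Finset.sum_mul, hcp,
      one_mul]
  have hsplit : ∑ i, ∑ j, c i j * (p i * Real.log (p i) - p i * Real.log (q j))
      = ∑ i, ∑ j, c i j * (p i * Real.log (p i) - p i * Real.log (q j) - (p i - q j)) := by
    have e : ∀ i j, c i j * (p i * Real.log (p i) - p i * Real.log (q j))
        = c i j * (p i * Real.log (p i) - p i * Real.log (q j) - (p i - q j))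
          + (c i j * p i - c i j * q j) := by
      intro i j; ring
    rw [Finset.sum_congr rfl (fun i _ => Finset.sum_congr rfl (fun j _ => e i j))]
    simp only [Finset.sum_add_distrib, Finset.sum_sub_distrib]
    rw [hcp, hcq]
    ring
  have hDnn : ∀ i j, 0 ≤ c i j * (p i * Real.log (p i) - p i * Real.log (q j) - (p i - q j)) := by
    intro i j
    refine mul_nonneg (hc0 i j) ?_
    have := (klein (p i) (q j) (hp0 i) (hq0 j)).1
    linarith
  have hSnn : 0 ≤ ∑ i, ∑ j, c i j * (p i * Real.log (p i) - p i * Real.log (q j)) := by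
    rw [hsplit]
    exact Finset.sum_nonneg fun i _ => Finset.sum_nonneg fun j _ => hDnn i j
  have hid : β⁻¹ * (∑ i, ∑ j, c i j * (p i * Real.log (p i) - p i * Real.log (q j)))
      = (∑ i, ∑ j, p i * ε j * c i j) + β⁻¹ * (∑ i, p i * Real.log (p i)) + β⁻¹ * Λ := by
    rw [hkey]
    field_simp
    ring
  constructor
  · nlinarith [mul_nonneg hβi.le hSnn]
  · intro heq i j
    have hS0 : ∑ i, ∑ j, c i j * (p i * Real.log (p i) - p i * Real.log (q j)) = 0 := by
      have h1 : β⁻¹ * (∑ i, ∑ j, c i j * (p i * Real.log (p i) - p i * Real.log (q j))) = 0 := by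
        rw [hid]; linarith
      rcases mul_eq_zero.mp h1 with h | h
      · exact absurd h (inv_ne_zero hβne)
      · exact h
    rw [hsplit] at hS0
    have h2 := (Finset.sum_eq_zero_iff_of_nonneg
      (fun i _ => Finset.sum_nonneg fun j _ => hDnn i j)).mp hS0 i (Finset.mem_univ i)
    have h3 := (Finset.sum_eq_zero_iff_of_nonneg
      (fun j _ => hDnn i j)).mp h2 j (Finset.mem_univ j)
    rcases mul_eq_zero.mp h3 with h | h
    · exact Or.inl h
    · exact Or.inr ((klein (p i) (q j) (hp0 i) (hq0 j)).2 (by linarith))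

end GibbsProofAux

open GibbsProofAux in
/-- For `β > 0` and Hermitian `H`, the Helmholtz functional attains its minimum over the set of
density matrices, and the unique minimizer is the Gibbs state `e^{-βH}/Tr(e^{-βH})`. -/
theorem gibbs_unique_minimizer {n : ℕ} (hn : 0 < n) (H : Matrix (Fin n) (Fin n) ℂ) (hH : H.IsHermitian)
    (β : ℝ) (hβ : 0 < β) :
    IsDensityMatrix (gibbs β H) ∧
      ∀ ρ : Matrix (Fin n) (Fin n) ℂ, IsDensityMatrix ρ →
        helmholtz H β (gibbs β H) ≤ helmholtz H β ρ ∧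
          (helmholtz H β ρ = helmholtz H β (gibbs β H) → ρ = gibbs β H) := by
  have hne : Nonempty (Fin n) := ⟨⟨0, hn⟩⟩
  have hβne : β ≠ 0 := hβ.ne'
  obtain ⟨U, hU1, hU2, ε, hHspec⟩ :
      ∃ U : Matrix (Fin n) (Fin n) ℂ, U * star U = 1 ∧ star U * U = 1 ∧
        ∃ ε : Fin n → ℝ, H = U * diagonal (fun i => (ε i : ℂ)) * star U :=
    ⟨hH.eigenvectorUnitary, Matrix.mem_unitaryGroup_iff.mp hH.eigenvectorUnitary.2,
      Matrix.mem_unitaryGroup_iff'.mp hH.eigenvectorUnitary.2,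
      hH.eigenvalues, hH.spectral_theorem⟩
  -- the Gibbs weights
  obtain ⟨q, Λ, hq0, hsq, hgibbs, hlogq⟩ :
      ∃ (q : Fin n → ℝ) (Λ : ℝ), (∀ i, 0 < q i) ∧ (∑ i, q i = 1) ∧
        gibbs β H = U * diagonal (fun i => (q i : ℂ)) * star U ∧
        (∀ j, Real.log (q j) = -(β * ε j) - Λ) := by
    set a : Fin n → ℝ := fun i => Real.exp (-(β * ε i)) with hadef
    have ha0 : ∀ i, 0 < a i := fun i => Real.exp_pos _
    set Zr : ℝ := ∑ i, a i with hZdef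
    have hZ0 : 0 < Zr := Finset.sum_pos (fun i _ => ha0 i) Finset.univ_nonempty
    have hAspec : NormedSpace.exp ((-β : ℂ) • H)
        = U * diagonal (fun i => ((a i : ℝ) : ℂ)) * star U := by
      have h1 : (-β : ℂ) • H = U * diagonal (fun i => ((-(β * ε i) : ℝ) : ℂ)) * star U := by
        rw [hHspec, ← smul_mul_assoc, ← mul_smul_comm]
        have hv : ((-β : ℂ) • fun i => ((ε i : ℝ) : ℂ)) = fun i => ((-(β * ε i) : ℝ) : ℂ) := by
          funext i
          simp only [Pi.smul_apply, smul_eq_mul]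
          push_cast
          ring
        rw [← diagonal_smul, hv]
      rw [h1, exp_conj_unitary U hU1 hU2, exp_diag_real]
    have htrA : (NormedSpace.exp ((-β : ℂ) • H)).trace = ((Zr : ℝ) : ℂ) := by
      rw [hAspec, trace_conj _ _ hU2, trace_diagonal, hZdef]
      push_cast
      rfl
    refine ⟨fun i => a i / Zr, Real.log Zr, fun i => div_pos (ha0 i) hZ0, ?_, ?_, ?_⟩
    · rw [← Finset.sum_div, ← hZdef, div_self hZ0.ne']
    · rw [gibbs, htrA, hAspec, ← smul_mul_assoc, ← mul_smul_comm]
      have hv : (((Zr : ℝ) : ℂ)⁻¹ • fun i => ((a i : ℝ) : ℂ))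
          = fun i => (((fun i => a i / Zr) i : ℝ) : ℂ) := by
        funext i
        simp only [Pi.smul_apply, smul_eq_mul]
        push_cast
        ring
      rw [← diagonal_smul, hv]
    · intro j
      rw [Real.log_div (ha0 j).ne' hZ0.ne', hadef, Real.log_exp]
  -- the Gibbs state is a density matrix
  have hgPSD : (gibbs β H).PosSemidef := by
    rw [hgibbs, Matrix.star_eq_conjTranspose]
    refine Matrix.PosSemidef.mul_mul_conjTranspose_same (Matrix.PosSemidef.diagonal ?_) U
    intro i
    simpa using Complex.zero_le_real.mpr (hq0 i).le
  have hgtr : (gibbs β H).trace = 1 := by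
    rw [hgibbs, trace_conj _ _ hU2, trace_diagonal]
    exact_mod_cast hsq
  have hgherm : (gibbs β H).IsHermitian := hgPSD.isHermitian
  -- value of the Helmholtz functional at the Gibbs state
  have hvng : vnEntropy (gibbs β H) = -∑ i, q i * Real.log (q i) := by
    simp only [vnEntropy]
    rw [dif_pos hgherm, sum_eig (gibbs β H) hgherm U hU1 q hgibbs]
  have htrgH : ((gibbs β H * H).trace).re = ∑ i, q i * ε i := by
    have h : gibbs β H * H
        = U * (diagonal (fun i => (q i : ℂ)) * diagonal (fun i => (ε i : ℂ))) * star U := by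
      rw [hgibbs]
      conv_lhs => rw [hHspec]
      exact conj_mul U _ _ hU2
    rw [h, trace_conj _ _ hU2, diagonal_mul_diagonal, trace_diagonal]
    rw [show (∑ i, (q i : ℂ) * (ε i : ℂ)) = ((∑ i, q i * ε i : ℝ) : ℂ) by push_cast; rfl]
    rw [Complex.ofReal_re]
  have hSq : ∑ i, q i * Real.log (q i) = -(β * ∑ i, q i * ε i) - Λ := by
    have h1 : ∀ i, q i * Real.log (q i) = -(β * (q i * ε i)) - q i * Λ := by
      intro i; rw [hlogq i]; ring
    rw [Finset.sum_congr rfl (fun i _ => h1 i), Finset.sum_sub_distrib, ← Finset.sum_mul, hsq,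
      one_mul]
    congr 1
    rw [Finset.mul_sum]
    exact Finset.sum_neg_distrib _
  have hhelmg : helmholtz H β (gibbs β H) = -(β⁻¹ * Λ) := by
    simp only [helmholtz]
    rw [htrgH, hvng, hSq]
    field_simp
    ring
  refine ⟨⟨hgPSD, hgtr⟩, ?_⟩
  intro ρ hρd
  obtain ⟨hρpsd, hρtr⟩ := hρd
  have hρh : ρ.IsHermitian := hρpsd.isHermitian
  obtain ⟨p, V, hV1, hV2, hρspec, hp0, hsp, hvnρ⟩ :
      ∃ (p : Fin n → ℝ) (V : Matrix (Fin n) (Fin n) ℂ),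
        V * star V = 1 ∧ star V * V = 1 ∧
        ρ = V * diagonal (fun i => (p i : ℂ)) * star V ∧
        (∀ i, 0 ≤ p i) ∧ (∑ i, p i = 1) ∧
        vnEntropy ρ = -∑ i, p i * Real.log (p i) := by
    refine ⟨hρh.eigenvalues, hρh.eigenvectorUnitary,
      Matrix.mem_unitaryGroup_iff.mp hρh.eigenvectorUnitary.2,
      Matrix.mem_unitaryGroup_iff'.mp hρh.eigenvectorUnitary.2,
      hρh.spectral_theorem, fun i => hρpsd.eigenvalues_nonneg i, ?_, ?_⟩
    · have h : ρ.trace = ((∑ i, hρh.eigenvalues i : ℝ) : ℂ) := by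
        conv_lhs => rw [hρh.spectral_theorem]
        rw [Unitary.conjStarAlgAut_apply]
        rw [trace_conj _ _ (Matrix.mem_unitaryGroup_iff'.mp hρh.eigenvectorUnitary.2),
          trace_diagonal]
        push_cast
        rfl
      rw [hρtr] at h
      exact_mod_cast h.symm
    · simp only [vnEntropy]
      rw [dif_pos hρh]
  -- the overlap matrix
  set W : Matrix (Fin n) (Fin n) ℂ := star V * U with hWdef
  have hsW : star W = star U * V := by rw [hWdef, Matrix.star_mul, star_star]
  have hW1 : W * star W = 1 := by
    rw [hsW, hWdef, Matrix.mul_assoc, ← Matrix.mul_assoc U, hU1, one_mul, hV2]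
  have hW2 : star W * W = 1 := by
    rw [hsW, hWdef, Matrix.mul_assoc, ← Matrix.mul_assoc V, hV1, one_mul, hU2]
  have hrow : ∀ i, ∑ j, Complex.normSq (W i j) = 1 := by
    intro i
    have h : ∑ j, W i j * star (W i j) = 1 := by
      have h0 := congrArg (fun M => M i i) hW1
      simpa [Matrix.mul_apply, Matrix.star_apply, Matrix.one_apply] using h0
    have h2 : ((∑ j, Complex.normSq (W i j) : ℝ) : ℂ) = 1 := by
      push_cast
      rw [← h]
      refine Finset.sum_congr rfl fun j _ => ?_
      rw [RCLike.star_def, Complex.mul_conj]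
    exact_mod_cast h2
  have hcol : ∀ j, ∑ i, Complex.normSq (W i j) = 1 := by
    intro j
    have h : ∑ i, star (W i j) * W i j = 1 := by
      have h0 := congrArg (fun M => M j j) hW2
      simpa [Matrix.mul_apply, Matrix.star_apply, Matrix.one_apply] using h0
    have h2 : ((∑ i, Complex.normSq (W i j) : ℝ) : ℂ) = 1 := by
      push_cast
      rw [← h]
      refine Finset.sum_congr rfl fun i _ => ?_
      rw [RCLike.star_def, mul_comm, Complex.mul_conj]
    exact_mod_cast h2
  -- trace of ρ * H
  have htrρH : ((ρ * H).trace).re = ∑ i, ∑ j, p i * ε j * Complex.normSq (W i j) := by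
    have hconj : ρ * H = V * (diagonal (fun i => (p i : ℂ)) * W
        * diagonal (fun i => (ε i : ℂ)) * star W) * star V := by
      rw [hρspec, hHspec, hWdef, hsW]
      simp only [Matrix.mul_assoc]
      rw [hV1, Matrix.mul_one]
    have hN : (diagonal (fun i => (p i : ℂ)) * W * diagonal (fun i => (ε i : ℂ))
        * star W).trace = ((∑ i, ∑ j, p i * ε j * Complex.normSq (W i j) : ℝ) : ℂ) := by
      rw [Matrix.trace]
      push_cast
      refine Finset.sum_congr rfl fun i _ => ?_
      rw [Matrix.diag_apply, Matrix.mul_apply]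
      refine Finset.sum_congr rfl fun j _ => ?_
      rw [Matrix.mul_diagonal, Matrix.diagonal_mul, Matrix.star_apply, RCLike.star_def]
      have := Complex.mul_conj (W i j)
      linear_combination ((p i : ℂ) * (ε j : ℂ)) * this
    rw [hconj, trace_conj _ _ hV2, hN, Complex.ofReal_re]
  have hhelmρ : helmholtz H β ρ = (∑ i, ∑ j, p i * ε j * Complex.normSq (W i j))
      + β⁻¹ * ∑ i, p i * Real.log (p i) := by
    simp only [helmholtz]
    rw [htrρH, hvnρ]
    ring
  have hcore := core p q ε (fun i j => Complex.normSq (W i j)) β Λ hβ hp0 hq0 hsp hsq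
    (fun i j => Complex.normSq_nonneg _) hrow hcol hlogq
  constructor
  · rw [hhelmρ, hhelmg]
    exact hcore.1
  · intro heq
    rw [hhelmρ, hhelmg] at heq
    have hkey := hcore.2 heq
    have hDW : diagonal (fun i => (p i : ℂ)) * W = W * diagonal (fun j => (q j : ℂ)) := by
      ext i j
      rw [Matrix.diagonal_mul, Matrix.mul_diagonal]
      rcases hkey i j with h | h
      · have hW0 : W i j = 0 := Complex.normSq_eq_zero.mp h
        rw [hW0, mul_zero, zero_mul]
      · rw [h]
        ring
    have e1 : V * W = U := by
      rw [hWdef, ← Matrix.mul_assoc, hV1, one_mul]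
    have e2 : star W * star V = star U := by
      rw [← Matrix.star_mul, e1]
    have e3 : W * (diagonal (fun j => (q j : ℂ)) * (star W * star V))
        = diagonal (fun i => (p i : ℂ)) * star V := by
      rw [← Matrix.mul_assoc, ← hDW, Matrix.mul_assoc, ← Matrix.mul_assoc W (star W) (star V),
        hW1, one_mul]
    rw [hρspec, hgibbs, ← e1, Matrix.star_mul]
    simp only [Matrix.mul_assoc]
    rw [e3]
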